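/- For a coalitional game on K players where the value of a nonempty coalition S is the maximum of individual rewards R(c) over c ∈ S (and v(∅)=0), with players sorted so that R(c_(1)) ≥ R(c_(2)) ≥ ... ≥ R(c_(K)) ≥ 0, the Shapley value of the j-th player equals the sum over k from j to K of (R(c_(k)) − R(c_(k+1)))/k, where R(c_(K+1)) := 0. -/

import Mathlib

open Finset

/-- Shapley value of player `i` in the coalitional game `v` on the finite player set `ι`. -/
noncomputable def shapley {ι : Type*} [Fintype ι] [DecidableEq ι]
    (v : Finset ι → ℝ) (i : ι) : ℝ :=
  ∑ S ∈ (Finset.univ.erase i).powerset,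
    ((Nat.factorial S.card : ℝ) * (Nat.factorial (Fintype.card ι - S.card - 1)) /
      (Nat.factorial (Fintype.card ι))) * (v (insert i S) - v S)

/-- The max-reward game: value of a nonempty coalition is the max of individual rewards. -/
noncomputable def maxGame {ι : Type*} (R : ι → ℝ) (S : Finset ι) : ℝ :=
  if h : S.Nonempty then S.sup' h R else 0

lemma nat_key {n t : ℕ} (ht : 0 < t) (htn : t ≤ n) :
    ∑ s ∈ range (n - t + 1), (n - t).choose s * (s.factorial * (n - s - 1).factorial)
      = (n - t).factorial * (t - 1).factorial * n.choose t := by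
  have h1 : ∀ s ∈ range (n - t + 1),
      (n - t).choose s * (s.factorial * (n - s - 1).factorial)
        = (n - t).factorial * (t - 1).factorial * (n - 1 - s).choose (t - 1) := by
    intro s hs
    rw [mem_range] at hs
    have hs' : s ≤ n - t := by omega
    have e1 : (n - 1 - s).choose (t - 1) * (t - 1).factorial * (n - t - s).factorial
        = (n - 1 - s).factorial := by
      have := Nat.choose_mul_factorial_mul_factorial (n := n - 1 - s) (k := t - 1) (by omega)
      rw [show n - 1 - s - (t - 1) = n - t - s by omega] at this
      exact this
    have e2 : (n - t).choose s * s.factorial * (n - t - s).factorial = (n - t).factorial :=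
      Nat.choose_mul_factorial_mul_factorial hs'
    have hns : n - s - 1 = n - 1 - s := by omega
    rw [hns, ← e1]
    nlinarith [e2, Nat.factorial_pos (n - t - s)]
  rw [sum_congr rfl h1, ← mul_sum]
  congr 1
  rw [← Finset.sum_range_reflect]
  have h2 : ∀ s ∈ range (n - t + 1),
      (n - 1 - (n - t + 1 - 1 - s)).choose (t - 1) = (s + (t - 1)).choose (t - 1) := by
    intro s hs; rw [mem_range] at hs; congr 1; omega
  rw [sum_congr rfl h2, Nat.sum_range_add_choose]
  congr 1 <;> omega

lemma real_key {n t : ℕ} (ht : 0 < t) (htn : t ≤ n) :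
    ∑ s ∈ range (n - t + 1),
      ((n - t).choose s : ℝ) * (s.factorial * (n - s - 1).factorial / n.factorial)
      = 1 / t := by
  have hfac : (n.factorial : ℝ) ≠ 0 := Nat.cast_ne_zero.2 (Nat.factorial_pos n).ne'
  have ht' : (t : ℝ) ≠ 0 := Nat.cast_ne_zero.2 ht.ne'
  have hN := nat_key ht htn
  have hchoose : n.choose t * t.factorial * (n - t).factorial = n.factorial :=
    Nat.choose_mul_factorial_mul_factorial htn
  have htfac : (t.factorial : ℝ) = t * (t - 1).factorial := by
    have : t.factorial = t * (t - 1).factorial := by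
      conv_lhs => rw [show t = (t - 1) + 1 by omega]
      rw [Nat.factorial_succ]; congr 1; omega
    rw [this]; push_cast; ring
  have key : (∑ s ∈ range (n - t + 1),
      ((n - t).choose s : ℝ) * (s.factorial * (n - s - 1).factorial))
      = (n - t).factorial * (t - 1).factorial * n.choose t := by
    exact_mod_cast congrArg (Nat.cast : ℕ → ℝ) hN
  have lhs_eq : ∑ s ∈ range (n - t + 1),
      ((n - t).choose s : ℝ) * (s.factorial * (n - s - 1).factorial / n.factorial)
      = (∑ s ∈ range (n - t + 1),
        ((n - t).choose s : ℝ) * (s.factorial * (n - s - 1).factorial)) / n.factorial := by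
    rw [sum_div]; exact sum_congr rfl fun s _ => by ring
  rw [lhs_eq, key]
  have hchooseR : (n.choose t : ℝ) * t.factorial * (n - t).factorial = n.factorial := by
    exact_mod_cast congrArg (Nat.cast : ℕ → ℝ) hchoose
  rw [← hchooseR, htfac]
  have h1 : ((n - t).factorial : ℝ) ≠ 0 := Nat.cast_ne_zero.2 (Nat.factorial_pos _).ne'
  have h2 : ((t - 1).factorial : ℝ) ≠ 0 := Nat.cast_ne_zero.2 (Nat.factorial_pos _).ne'
  have h3 : (n.choose t : ℝ) ≠ 0 := Nat.cast_ne_zero.2 (Nat.choose_pos htn).ne'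
  field_simp

open scoped Classical in
/-- Threshold game: value 1 iff the coalition contains a player of index `≤ k`. -/
noncomputable def thrG {K : ℕ} (k : ℕ) (S : Finset (Fin K)) : ℝ :=
  if ∃ i ∈ S, (i : ℕ) ≤ k then 1 else 0

lemma telescope (F : ℕ → ℝ) (a b : ℕ) (hab : a ≤ b) :
    ∑ k ∈ Ico a b, (F k - F (k + 1)) = F a - F b := by
  induction b, hab using Nat.le_induction with
  | base => simp
  | succ b hb ih => rw [Finset.sum_Ico_succ_top hb, ih]; ring

lemma filter_range_eq_Ico {m K : ℕ} :
    (range K).filter (fun k => m ≤ k) = Ico m K := by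
  ext x; simp [Finset.mem_filter, Finset.mem_range, Finset.mem_Ico, and_comm]

lemma shapley_sum {ι : Type*} [Fintype ι] [DecidableEq ι] (A : Finset ℕ)
    (c : ℕ → ℝ) (g : ℕ → Finset ι → ℝ) (i : ι) :
    shapley (fun S => ∑ k ∈ A, c k * g k S) i = ∑ k ∈ A, c k * shapley (g k) i := by
  unfold shapley
  simp only [← Finset.sum_sub_distrib, Finset.mul_sum]
  rw [Finset.sum_comm]
  refine sum_congr rfl fun k _ => ?_
  exact sum_congr rfl fun S _ => by ring

lemma maxGame_decomp {K : ℕ} (R : Fin K → ℝ)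
    (hsort : ∀ i j : Fin K, i ≤ j → R j ≤ R i) (S : Finset (Fin K)) :
    maxGame R S = ∑ k ∈ range K,
      ((if h : k < K then R ⟨k, h⟩ else 0) - (if h : k + 1 < K then R ⟨k + 1, h⟩ else 0))
        * thrG k S := by
  classical
  set F : ℕ → ℝ := fun k => if h : k < K then R ⟨k, h⟩ else 0 with hF
  by_cases h : S.Nonempty
  · set m := S.min' h with hm
    have hsup : S.sup' h R = R m :=
      le_antisymm (Finset.sup'_le h R fun i hi => hsort m i (S.min'_le i hi))
        (Finset.le_sup' R (S.min'_mem h))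
    have hthr : ∀ k, thrG k S = if (m : ℕ) ≤ k then 1 else 0 := by
      intro k
      unfold thrG
      congr 1
      simp only [eq_iff_iff]
      constructor
      · rintro ⟨i, hi, hik⟩
        exact le_trans (S.min'_le i hi) hik
      · intro hmk
        exact ⟨m, S.min'_mem h, hmk⟩
    have hsum : ∑ k ∈ range K, (F k - F (k + 1)) * thrG k S
        = ∑ k ∈ Ico (m : ℕ) K, (F k - F (k + 1)) := by
      rw [← filter_range_eq_Ico, Finset.sum_filter]
      refine sum_congr rfl fun k _ => ?_
      rw [hthr k]
      split <;> simp
    rw [maxGame, dif_pos h, hsup, hsum, telescope F m K m.2.le]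
    have hFm : F (m : ℕ) = R m := by rw [hF]; simp [m.2]
    have hFK : F K = 0 := by rw [hF]; simp
    rw [hFm, hFK, sub_zero]
  · rw [maxGame, dif_neg h]
    rw [Finset.not_nonempty_iff_eq_empty] at h
    subst h
    simp [thrG]

lemma shapley_thrG {K : ℕ} (k : ℕ) (hk : k < K) (j : Fin K) :
    shapley (thrG k) j = if (j : ℕ) ≤ k then 1 / ((k : ℝ) + 1) else 0 := by
  classical
  by_cases hjk : (j : ℕ) ≤ k
  · rw [if_pos hjk]
    set B : Finset (Fin K) := (Iic (⟨k, hk⟩ : Fin K))ᶜ with hBdef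
    have hmemB : ∀ i : Fin K, i ∈ B ↔ ¬ (i : ℕ) ≤ k := by
      intro i; simp [hBdef, Fin.le_def]
    have hins : ∀ S : Finset (Fin K), thrG k (insert j S) = 1 := by
      intro S; unfold thrG
      exact if_pos ⟨j, mem_insert_self j S, hjk⟩
    have hterm : ∀ S ∈ (univ.erase j).powerset,
        ((Nat.factorial S.card : ℝ) * (Nat.factorial (Fintype.card (Fin K) - S.card - 1)) /
          (Nat.factorial (Fintype.card (Fin K)))) * (thrG k (insert j S) - thrG k S)
        = if S ⊆ B then
            ((Nat.factorial S.card : ℝ) * (Nat.factorial (Fintype.card (Fin K) - S.card - 1)) /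
              (Nat.factorial (Fintype.card (Fin K)))) else 0 := by
      intro S _
      by_cases hP : ∃ i ∈ S, (i : ℕ) ≤ k
      · obtain ⟨i, hi, hik⟩ := hP
        have hnot : ¬ S ⊆ B := fun hSB => (hmemB i).1 (hSB hi) hik
        rw [if_neg hnot, hins, thrG, if_pos ⟨i, hi, hik⟩]
        ring
      · have hSB : S ⊆ B := fun i hi =>
          (hmemB i).2 fun hik => hP ⟨i, hi, hik⟩
        rw [if_pos hSB, hins, thrG, if_neg hP]
        ring
    rw [shapley, sum_congr rfl hterm, ← Finset.sum_filter]
    have hBe : B ⊆ univ.erase j := by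
      intro i hi
      refine mem_erase.2 ⟨fun hij => ?_, mem_univ i⟩
      exact (hmemB i).1 hi (hij ▸ hjk)
    have hfilt : (univ.erase j).powerset.filter (fun S => S ⊆ B) = B.powerset := by
      ext S
      simp only [mem_filter, mem_powerset]
      exact ⟨fun h => h.2, fun h => ⟨h.trans hBe, h⟩⟩
    rw [hfilt]
    have hcard : B.card = K - (k + 1) := by
      rw [hBdef, card_compl, Fin.card_Iic]
      simp
    rw [Finset.sum_powerset_apply_card
      (f := fun m => ((Nat.factorial m : ℝ) * (Nat.factorial (Fintype.card (Fin K) - m - 1)) /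
        (Nat.factorial (Fintype.card (Fin K))))), hcard]
    have hkey := real_key (n := K) (t := k + 1) (Nat.succ_pos k) hk
    simp only [Fintype.card_fin]
    rw [show (1 : ℝ) / ((k : ℝ) + 1) = 1 / ((k + 1 : ℕ) : ℝ) by push_cast; ring, ← hkey]
    refine sum_congr rfl fun s _ => ?_
    rw [nsmul_eq_mul]
  · rw [if_neg hjk, shapley]
    refine sum_eq_zero fun S _ => ?_
    have heq : thrG k (insert j S) = thrG k S := by
      unfold thrG
      congr 1
      simp only [eq_iff_iff, mem_insert]
      constructor
      · rintro ⟨i, hi | hi, hik⟩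
        · exact absurd (hi ▸ hik) hjk
        · exact ⟨i, hi, hik⟩
      · rintro ⟨i, hi, hik⟩
        exact ⟨i, Or.inr hi, hik⟩
    rw [heq, sub_self, mul_zero]

/-- Closed form for the Shapley value of the max-reward game with players sorted
in descending order of nonnegative rewards (0-based index `j` is rank `j+1`). -/
theorem shapley_maxGame_closed_form {K : ℕ} (R : Fin K → ℝ)
    (hsort : ∀ i j : Fin K, i ≤ j → R j ≤ R i) (hnn : ∀ i, 0 ≤ R i) (j : Fin K) :
    shapley (maxGame R) j =
      ∑ k ∈ Finset.Ico (j : ℕ) K,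
        ((if h : k < K then R ⟨k, h⟩ else 0) - (if h : k + 1 < K then R ⟨k + 1, h⟩ else 0))
          / (k + 1) := by
  classical
  have hdec : maxGame R = fun S => ∑ k ∈ range K,
      ((if h : k < K then R ⟨k, h⟩ else 0) - (if h : k + 1 < K then R ⟨k + 1, h⟩ else 0))
        * thrG k S :=
    funext fun S => maxGame_decomp R hsort S
  rw [hdec, shapley_sum]
  have hcong : ∀ k ∈ range K,
      ((if h : k < K then R ⟨k, h⟩ else 0) - (if h : k + 1 < K then R ⟨k + 1, h⟩ else 0))
        * shapley (thrG k) j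
      = if (j : ℕ) ≤ k then
          ((if h : k < K then R ⟨k, h⟩ else 0) - (if h : k + 1 < K then R ⟨k + 1, h⟩ else 0))
            / ((k : ℝ) + 1) else 0 := by
    intro k hkr
    rw [shapley_thrG k (mem_range.1 hkr) j, mul_ite, mul_one_div, mul_zero]
  rw [sum_congr rfl hcong, ← Finset.sum_filter, filter_range_eq_Ico]
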